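/- A Borel set S ⊆ ℝⁿ has Lebesgue measure zero if and only if S is shy, i.e., there exists a Borel measure μ on ℝⁿ satisfying 0 < μ(U) < ∞ for some compact set U, such that μ(S + v) = 0 for every v ∈ ℝⁿ. -/

import Mathlib

open MeasureTheory Set

/-- A Borel set `S ⊆ ℝⁿ` has Lebesgue measure zero iff it is shy, i.e. there is a
Borel measure `μ`, positive and finite on some compact set, annihilating every
translate of `S`. -/
theorem stmt_1 (n : ℕ) (S : Set (EuclideanSpace ℝ (Fin n))) (hS : MeasurableSet S) :
    volume S = 0 ↔
      ∃ μ : Measure (EuclideanSpace ℝ (Fin n)),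
        (∃ U : Set (EuclideanSpace ℝ (Fin n)), IsCompact U ∧ 0 < μ U ∧ μ U < ⊤) ∧
        ∀ v : EuclideanSpace ℝ (Fin n), μ ((fun x => x + v) '' S) = 0 := by
  constructor
  · intro hvol
    refine ⟨volume, ⟨Metric.closedBall 0 1, isCompact_closedBall 0 1, ?_, ?_⟩, ?_⟩
    · exact Metric.measure_closedBall_pos volume 0 one_pos
    · exact measure_closedBall_lt_top
    · intro v
      have himg : (fun x => x + v) '' S = (fun x => x + (-v)) ⁻¹' S := by
        ext x
        simp only [mem_image, mem_preimage]
        constructor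
        · rintro ⟨s, hs, rfl⟩; simpa using hs
        · intro h; exact ⟨x + (-v), h, by abel⟩
      rw [himg, measure_preimage_add_right]
      exact hvol
  · rintro ⟨μ, ⟨U, hUc, hUpos, hUfin⟩, hnull⟩
    set ν := μ.restrict U with hν
    have hfin : IsFiniteMeasure ν := by
      constructor
      rw [hν, Measure.restrict_apply_univ]
      exact hUfin
    have hνU : ν univ = μ U := by rw [hν, Measure.restrict_apply_univ]
    -- the set of pairs (v, y) with y - v ∈ S
    set T : Set (EuclideanSpace ℝ (Fin n) × EuclideanSpace ℝ (Fin n)) :=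
      {p | p.2 - p.1 ∈ S} with hT
    have hTm : MeasurableSet T := (measurable_snd.sub measurable_fst) hS
    have h1 : (volume.prod ν) T = 0 := by
      rw [Measure.prod_apply hTm]
      have : ∀ v, ν (Prod.mk v ⁻¹' T) = 0 := by
        intro v
        have hset : Prod.mk v ⁻¹' T = (fun x => x + v) '' S := by
          ext y
          simp only [hT, mem_preimage, mem_setOf_eq, mem_image]
          constructor
          · intro h; exact ⟨y - v, h, by abel⟩
          · rintro ⟨s, hs, rfl⟩; simpa using hs
        rw [hset]
        refine le_antisymm ?_ zero_le
        calc ν ((fun x => x + v) '' S) ≤ μ ((fun x => x + v) '' S) :=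
              Measure.restrict_le_self _
          _ = 0 := hnull v
      simp [this]
    have h2 : (volume.prod ν) T = volume S * ν univ := by
      rw [Measure.prod_apply_symm hTm]
      have : ∀ y, volume ((fun v => (v, y)) ⁻¹' T) = volume S := by
        intro y
        have hset : (fun v => (v, y)) ⁻¹' T = (fun v => y - v) ⁻¹' S := rfl
        rw [hset]
        exact (Measure.measurePreserving_sub_left volume y).measure_preimage hS.nullMeasurableSet
      simp only [this]
      rw [lintegral_const]
    rw [h1] at h2
    have hνUpos : 0 < ν univ := by rw [hνU]; exact hUpos
    rcases mul_eq_zero.mp h2.symm with h | h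
    · exact h
    · exact absurd h hνUpos.ne'
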